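/- arXiv:math/0412339 — 3 statements merged into one kernel-verified Lean document; each statement's English description precedes it below -/
import Mathlib

section
/- Let $A_1,\dots,A_s$ be nonnegative integers and let $k_1,\dots,k_s$ be positive integers with $1 \le k_i \le A_1+\cdots+A_s$ for all $i$. Then either there exists an index $i$ with $1\le k_i \le A_i$, or there exist indices $i < j$ with $-A_j \le k_i - k_j \le A_i - 1$. -/
open Finset

private lemma insert_chain {α : Type*} (r : α → α → Prop) :
    ∀ (l : List α) (x : α), (∀ y ∈ l, r x y ∨ r y x) → l.Chain' r →
      ∃ l1 l2, l = l1 ++ l2 ∧ (l1 ++ x :: l2).Chain' r := by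
  intro l
  induction l with
  | nil => exact fun x _ _ => ⟨[], [], rfl, List.isChain_singleton x⟩
  | cons a t ih =>
    intro x htot hc
    rcases htot a (by simp) with h | h
    · exact ⟨[], a :: t, rfl, List.isChain_cons_cons.mpr ⟨h, hc⟩⟩
    · obtain ⟨t1, t2, ht, hch⟩ := ih x (fun y hy => htot y (by simp [hy])) hc.tail
      refine ⟨a :: t1, t2, by rw [ht]; rfl, ?_⟩
      rw [List.cons_append, List.Chain', List.isChain_cons]
      refine ⟨?_, hch⟩
      intro b hb
      cases t1 with
      | nil =>
        simp at hb
        exact hb ▸ h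
      | cons c t1' =>
        simp at hb
        have := (List.isChain_cons.mp hc).1 c
        rw [ht] at this
        exact hb ▸ this (by simp)

private lemma exists_chain_perm {α : Type*} (r : α → α → Prop) :
    ∀ (l : List α), (l.Pairwise fun a b => r a b ∨ r b a) →
      ∃ l' : List α, l'.Perm l ∧ l'.Chain' r := by
  intro l
  induction l with
  | nil => exact fun _ => ⟨[], .rfl, List.IsChain.nil⟩
  | cons x t ih =>
    intro hp
    obtain ⟨l', hperm, hch⟩ := ih hp.of_cons
    have htot : ∀ y ∈ l', r x y ∨ r y x := fun y hy =>
      (List.pairwise_cons.mp hp).1 y (hperm.mem_iff.mp hy)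
    obtain ⟨l1, l2, hl, hch'⟩ := insert_chain r l' x htot hch
    refine ⟨l1 ++ x :: l2, ?_, hch'⟩
    rw [hl] at hperm
    exact List.perm_middle.trans (hperm.cons x)

private lemma chain_bound {α : Type*} (A k : α → ℤ) :
    ∀ (L : List α) (a : α) (h : (a :: L) ≠ []),
      (a :: L).Chain' (fun i j => A i ≤ k i - k j) →
      k ((a :: L).getLast h) + ((a :: L).map A).sum ≤ k a + A ((a :: L).getLast h) := by
  intro L
  induction L with
  | nil => intro a _ _; simp
  | cons b t ih =>
    intro a _ hc
    have h1 : A a ≤ k a - k b := (List.isChain_cons_cons.mp hc).1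
    have h2 := ih b (by simp) (List.isChain_cons_cons.mp hc).2
    rw [List.getLast_cons (by simp : (b :: t) ≠ [])]
    simp only [List.map_cons, List.sum_cons] at *
    linarith

/-- The tournament lemma (Lemma 3.4 of Gessel–Xin): if `1 ≤ k i ≤ A 1 + ⋯ + A s` for
all `i`, then either `1 ≤ k i ≤ A i` for some `i`, or `-A j ≤ k i - k j ≤ A i - 1`
for some `i < j`. -/
theorem stmt5 (s : ℕ) (hs : 1 ≤ s) (A : Fin s → ℤ) (hA : ∀ i, 0 ≤ A i)
    (k : Fin s → ℤ) (hk : ∀ i, 1 ≤ k i ∧ k i ≤ ∑ j, A j) :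
    (∃ i, 1 ≤ k i ∧ k i ≤ A i) ∨
      ∃ i j, i < j ∧ -A j ≤ k i - k j ∧ k i - k j ≤ A i - 1 := by
  by_contra hcon
  push_neg at hcon
  obtain ⟨h1, h2⟩ := hcon
  set r : Fin s → Fin s → Prop := fun i j => A i ≤ k i - k j with hr
  have hpw : (List.finRange s).Pairwise fun a b => r a b ∨ r b a := by
    refine (List.pairwise_lt_finRange s).imp ?_
    intro a b hab
    rcases le_or_gt (A a) (k a - k b) with h | h
    · exact Or.inl h
    · right
      have := h2 a b hab
      rcases le_or_gt (-A b) (k a - k b) with h' | h'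
      · have := this h'
        simp only [hr]
        omega
      · simp only [hr]
        omega
  obtain ⟨l', hperm, hch⟩ := exists_chain_perm r (List.finRange s) hpw
  have hne : l' ≠ [] := by
    intro h
    rw [h] at hperm
    have := hperm.length_eq
    simp [List.length_finRange] at this
    omega
  obtain ⟨a, L, rfl⟩ := List.exists_cons_of_ne_nil hne
  have hbound := chain_bound A k L a (by simp) hch
  have hsum : ((a :: L).map A).sum = ∑ j, A j := by
    rw [Fin.sum_univ_def]
    exact (hperm.map A).sum_eq
  set m := (a :: L).getLast (by simp)
  have hm1 : 1 ≤ k m := (hk m).1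
  have hm2 : A m < k m := h1 m hm1
  have ha : k a ≤ ∑ j, A j := (hk a).2
  rw [hsum] at hbound
  linarith
end

section
/- Suppose positive integers $k_1,\dots,k_s$ and nonnegative integers $A_1,\dots,A_s$ satisfy: for all $i$, $k_i > A_i$, and for all $i<j$, either $k_i - k_j \ge A_i$ or $k_i - k_j \le -A_j - 1$. Then some $k_i$ exceeds $A_1 + \cdots + A_s$. -/
open Finset

/-- Contrapositive form of the tournament lemma: if `k i > A i` for all `i` and for
all `i < j` either `k i - k j ≥ A i` or `k i - k j ≤ -A j - 1`, then some `k i`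
exceeds `A 1 + ⋯ + A s`. -/
theorem stmt6 (s : ℕ) (hs : 1 ≤ s) (A : Fin s → ℤ) (hA : ∀ i, 0 ≤ A i)
    (k : Fin s → ℤ) (hk : ∀ i, 0 < k i) (h1 : ∀ i, A i < k i)
    (h2 : ∀ i j : Fin s, i < j → A i ≤ k i - k j ∨ k i - k j ≤ -A j - 1) :
    ∃ i, (∑ j, A j) < k i := by
  suffices h : ∀ T : Finset (Fin s), T.Nonempty → ∃ i ∈ T, (∑ j ∈ T, A j) < k i by
    obtain ⟨i, _, hi⟩ := h Finset.univ ⟨⟨0, hs⟩, mem_univ _⟩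
    exact ⟨i, hi⟩
  intro T
  induction T using Finset.strongInduction with
  | _ T ih =>
    intro hT
    obtain ⟨m0, hm0, hmax⟩ := T.exists_max_image k hT
    set M := T.filter (fun j => ∀ x ∈ T, k x ≤ k j) with hM
    have hMne : M.Nonempty := ⟨m0, mem_filter.mpr ⟨hm0, hmax⟩⟩
    set m := M.min' hMne with hm
    have hmM : m ∈ M := M.min'_mem hMne
    have hmT : m ∈ T := (mem_filter.mp hmM).1
    have hmmax : ∀ x ∈ T, k x ≤ k m := (mem_filter.mp hmM).2
    have key : ∀ j ∈ T, j ≠ m → k j + A m ≤ k m := by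
      intro j hj hjm
      rcases lt_or_gt_of_ne hjm with hlt | hgt
      · have hkj : k j < k m := by
          rcases lt_or_eq_of_le (hmmax j hj) with h | h
          · exact h
          · exfalso
            have hjM : j ∈ M := mem_filter.mpr
              ⟨hj, fun x hx => (hmmax x hx).trans h.ge⟩
            exact absurd (M.min'_le j hjM) (not_le.mpr hlt)
        rcases h2 j m hlt with h | h
        · linarith [hA j]
        · linarith
      · rcases h2 m j hgt with h | h
        · linarith
        · linarith [hmmax j hj, hA j]
    by_cases hsing : T = {m}
    · refine ⟨m, hmT, ?_⟩
      rw [hsing, Finset.sum_singleton]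
      exact h1 m
    · have hT' : (T.erase m).Nonempty := by
        rcases Finset.eq_singleton_or_nontrivial hmT with h | h
        · exact absurd h hsing
        · obtain ⟨x, hx, y, hy, hxy⟩ := h
          rcases eq_or_ne x m with rfl | hxm
          · exact ⟨y, Finset.mem_erase.mpr ⟨hxy.symm, hy⟩⟩
          · exact ⟨x, Finset.mem_erase.mpr ⟨hxm, hx⟩⟩
      obtain ⟨i, hiT', hi⟩ := ih (T.erase m) (Finset.erase_ssubset hmT) hT'
      refine ⟨m, hmT, ?_⟩
      have hiT : i ∈ T := Finset.mem_of_mem_erase hiT'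
      have him : i ≠ m := Finset.ne_of_mem_erase hiT'
      have hkey := key i hiT him
      have hsum : ∑ j ∈ T.erase m, A j + A m = ∑ j ∈ T, A j :=
        Finset.sum_erase_add T A hmT
      linarith
end

section
/- With notation as in the Gessel–Xin proof, let $r_0 = k_0 = 0$, let $0 < r_1 < \cdots < r_s \le n$ and $1 \le k_i \le b$ for $1\le i\le s$, and define $\mathcal{Q}(b\mid \mathbf{r};\mathbf{k}) = E_{\mathbf{r},\mathbf{k}}\big[\mathcal{Q}(b)\prod_{i=1}^s (1 - x_0/(x_{r_i} q^{k_i}))\big]$, where $E_{\mathbf{r},\mathbf{k}}$ replaces $x_{r_i}$ by $x_{r_s} q^{k_s - k_i}$ for $i = 0,1,\dots,s-1$. If $1 \le k_i \le a_{r_1} + \cdots + a_{r_s}$ for all $1\le i\le s$, then $\mathcal{Q}(b\mid\mathbf{r};\mathbf{k}) = 0$. -/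
open Finset
open scoped Classical

noncomputable section

/-- The field `ℚ(q)(x_0, x_1, x_2, …)` of rational functions. -/
abbrev FF : Type := FractionRing (MvPolynomial ℕ (RatFunc ℚ))

/-- The variable `x_j` as a rational function. -/
def XX (j : ℕ) : FF := algebraMap (MvPolynomial ℕ (RatFunc ℚ)) FF (MvPolynomial.X j)

/-- The parameter `q` as a rational function. -/
def qq : FF := algebraMap (MvPolynomial ℕ (RatFunc ℚ)) FF (MvPolynomial.C RatFunc.X)

/-- The substitution `E_{𝐫,𝐤}`, which replaces `x_{r i}` by `x_{r s} q^(k s - k i)`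
for `i = 0, 1, …, s-1` (and leaves the other variables unchanged). -/
def Esub (s : ℕ) (r k : ℕ → ℕ) : ℕ → FF := fun j =>
  if h : ∃ i, i < s ∧ r i = j then
    XX (r s) * qq ^ ((k s : ℤ) - (k h.choose : ℤ))
  else XX j

/-- `𝒬(b ∣ 𝐫; 𝐤) = E_{𝐫,𝐤}[𝒬(b) ∏_{i=1}^s (1 - x_0/(x_{r i} q^{k i}))]`, where
`𝒬(b) = ∏_{j=1}^n (q x_j/x_0)_{a_j} / ∏_{c=1}^b (1 - x_0/(x_j q^c))
  ⬝ ∏_{1 ≤ i < j ≤ n} (x_i/x_j)_{a_i} (q x_j/x_i)_{a_j}`: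
the factors `∏_{i=1}^s (1 - x_0/(x_{r i} q^{k i}))` cancel exactly the factors of
the denominator of `𝒬(b)` that are taken to zero by `E_{𝐫,𝐤}`, and `E_{𝐫,𝐤}` is
applied to the resulting rational function. -/
def Qrk (n s b : ℕ) (a r k : ℕ → ℕ) : FF :=
  (∏ j ∈ Icc 1 n,
    ((∏ c ∈ range (a j), (1 - qq ^ (c+1) * Esub s r k j / Esub s r k 0)) /
     ∏ c ∈ (Icc 1 b).filter (fun c => ¬ ∃ i ∈ Icc 1 s, r i = j ∧ k i = c),
       (1 - Esub s r k 0 / (Esub s r k j * qq ^ c)))) *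
  ∏ j ∈ Icc 1 n, ∏ i ∈ Ioo 0 j,
    ((∏ c ∈ range (a i), (1 - qq ^ c * Esub s r k i / Esub s r k j)) *
     ∏ c ∈ range (a j), (1 - qq ^ (c+1) * Esub s r k j / Esub s r k i))

lemma XX_ne_zero (j : ℕ) : XX j ≠ 0 := by
  simp only [XX, ne_eq, IsFractionRing.to_map_eq_zero_iff]
  exact MvPolynomial.X_ne_zero j

lemma qq_ne_zero : qq ≠ 0 := by
  simp only [qq, ne_eq, IsFractionRing.to_map_eq_zero_iff, MvPolynomial.C_eq_zero]
  exact RatFunc.X_ne_zero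

lemma qpow_cancel (y q : FF) (hy : y ≠ 0) (hq : q ≠ 0) (m : ℕ) (e1 e2 : ℤ)
    (h : (m : ℤ) + e1 = e2) : q ^ m * (y * q ^ e1) / (y * q ^ e2) = 1 := by
  have hz : q ^ m * (y * q ^ e1) = y * q ^ e2 := by
    rw [← h, zpow_add₀ hq, ← zpow_natCast q m]; ring
  rw [hz, div_self (mul_ne_zero hy (zpow_ne_zero _ hq))]

lemma Esub_r (s : ℕ) (r k : ℕ → ℕ) (hmono : ∀ i j, j ≤ s → i < j → r i < r j)
    (i : ℕ) (hi : i ≤ s) :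
    Esub s r k (r i) = XX (r s) * qq ^ ((k s : ℤ) - (k i : ℤ)) := by
  simp only [Esub]
  by_cases h : ∃ i', i' < s ∧ r i' = r i
  · rw [dif_pos h]
    have hc := h.choose_spec
    have hci : h.choose = i := by
      rcases lt_trichotomy h.choose i with hlt | he | hgt
      · exact absurd hc.2 (ne_of_lt (hmono _ _ hi hlt))
      · exact he
      · exact absurd hc.2 (ne_of_gt (hmono _ _ hc.1.le hgt))
    rw [hci]
  · rw [dif_neg h]
    have his : i = s := by
      by_contra hne
      exact h ⟨i, lt_of_le_of_ne hi hne, rfl⟩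
    rw [his, sub_self, zpow_zero, mul_one]

lemma key (A k : ℕ → ℕ) : ∀ S : Finset ℕ, S.Nonempty →
    (∀ i ∈ S, A i + 1 ≤ k i) →
    (∀ i ∈ S, ∀ j ∈ S, i < j → (k j + A i ≤ k i ∨ k i + A j + 1 ≤ k j)) →
    ∃ i ∈ S, (∑ j ∈ S, A j) + 1 ≤ k i := by
  intro S
  induction S using Finset.strongInduction with
  | _ S IH =>
    intro hne H1 H2
    obtain ⟨m, hm, hmax⟩ := S.exists_max_image k hne
    set T := S.filter (fun j => ∀ j' ∈ S, k j' ≤ k j) with hT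
    have hTne : T.Nonempty := ⟨m, by simp only [hT, Finset.mem_filter]; exact ⟨hm, hmax⟩⟩
    set i := T.min' hTne with hi
    have hiT : i ∈ T := T.min'_mem hTne
    have hiS : i ∈ S := (Finset.mem_filter.mp hiT).1
    have himax : ∀ j ∈ S, k j ≤ k i := (Finset.mem_filter.mp hiT).2
    have himin : ∀ j ∈ T, i ≤ j := fun j hj => T.min'_le j hj
    by_cases hS' : (S.erase i).Nonempty
    · obtain ⟨j, hjS', hj⟩ := IH (S.erase i) (Finset.erase_ssubset hiS) hS'
        (fun x hx => H1 x (Finset.mem_of_mem_erase hx))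
        (fun x hx y hy hxy => H2 x (Finset.mem_of_mem_erase hx) y (Finset.mem_of_mem_erase hy) hxy)
      have hji : j ≠ i := Finset.ne_of_mem_erase hjS'
      have hjS : j ∈ S := Finset.mem_of_mem_erase hjS'
      have hdom : k j + A i ≤ k i := by
        rcases lt_or_gt_of_ne hji with hlt | hgt
        · rcases H2 j hjS i hiS hlt with h | h
          · have hkj : k j = k i := le_antisymm (himax j hjS) (by omega)
            have hjT : j ∈ T := Finset.mem_filter.mpr
              ⟨hjS, fun j' hj' => hkj ▸ himax j' hj'⟩
            exact absurd (himin j hjT) (by omega)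
          · omega
        · rcases H2 i hiS j hjS hgt with h | h
          · exact h
          · have := himax j hjS; omega
      have hsum : ∑ x ∈ S, A x = A i + ∑ x ∈ S.erase i, A x :=
        (Finset.add_sum_erase S A hiS).symm
      exact ⟨i, hiS, by omega⟩
    · have hsing : S = {i} := by
        apply Finset.eq_singleton_iff_unique_mem.mpr
        refine ⟨hiS, fun x hx => ?_⟩
        by_contra hne'
        exact hS' ⟨x, Finset.mem_erase.mpr ⟨hne', hx⟩⟩
      refine ⟨i, hiS, ?_⟩
      rw [hsing, Finset.sum_singleton]
      exact H1 i hiS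

/-- Vanishing property (i) of Lemma 4.1 of Gessel–Xin: with `r 0 = k 0 = 0`,
`0 < r 1 < ⋯ < r s ≤ n` and `1 ≤ k i ≤ b`, if moreover
`1 ≤ k i ≤ a_{r 1} + ⋯ + a_{r s}` for all `1 ≤ i ≤ s`, then
`𝒬(b ∣ 𝐫; 𝐤) = 0`. -/
theorem stmt16 (n s b : ℕ) (a r k : ℕ → ℕ) (hs : 1 ≤ s) (hb : 0 < b)
    (hr0 : r 0 = 0) (hk0 : k 0 = 0)
    (hrmono : ∀ i, i < s → r i < r (i+1)) (hrn : r s ≤ n)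
    (hk : ∀ i ∈ Icc 1 s, 1 ≤ k i ∧ k i ≤ b)
    (hmain : ∀ i ∈ Icc 1 s, k i ≤ ∑ i' ∈ Icc 1 s, a (r i')) :
    Qrk n s b a r k = 0 := by
  have hmono : ∀ i j, j ≤ s → i < j → r i < r j := by
    intro i j
    induction j with
    | zero => intro _ h; omega
    | succ m ih =>
      intro hm hij
      rcases Nat.lt_or_ge i m with h | h
      · exact lt_trans (ih (by omega) h) (hrmono m (by omega))
      · have hi : i = m := by omega
        subst hi
        exact hrmono i (by omega)
  have hE : ∀ i, i ≤ s → Esub s r k (r i) = XX (r s) * qq ^ ((k s : ℤ) - (k i : ℤ)) :=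
    fun i hi => Esub_r s r k hmono i hi
  have hE0 : Esub s r k 0 = XX (r s) * qq ^ ((k s : ℤ) - (k 0 : ℤ)) := by
    have h := hE 0 (Nat.zero_le s); rwa [hr0] at h
  have hrIcc : ∀ i, 1 ≤ i → i ≤ s → r i ∈ Icc 1 n := by
    intro i h1 h2
    rw [mem_Icc]
    constructor
    · have := hmono 0 i h2 (by omega); omega
    · rcases eq_or_lt_of_le h2 with he | hl
      · rw [he]; exact hrn
      · exact le_trans (le_of_lt (hmono i s le_rfl hl)) hrn
  unfold Qrk
  by_cases h1 : ∀ i ∈ Icc 1 s, a (r i) + 1 ≤ k i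
  · by_cases h2 : ∀ i ∈ Icc 1 s, ∀ j ∈ Icc 1 s, i < j →
        (k j + a (r i) ≤ k i ∨ k i + a (r j) + 1 ≤ k j)
    · exfalso
      obtain ⟨i, hi, hki⟩ := key (fun i => a (r i)) k (Icc 1 s)
        ⟨1, mem_Icc.mpr ⟨le_rfl, hs⟩⟩ h1 h2
      have := hmain i hi
      omega
    · push_neg at h2
      obtain ⟨i, hi, j, hj, hij, hA, hB⟩ := h2
      obtain ⟨hi1, his⟩ := mem_Icc.mp hi
      obtain ⟨hj1, hjs⟩ := mem_Icc.mp hj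
      apply mul_eq_zero_of_right
      refine Finset.prod_eq_zero (hrIcc j hj1 hjs) ?_
      have hriIoo : r i ∈ Ioo 0 (r j) := by
        rw [mem_Ioo]
        refine ⟨?_, hmono i j hjs hij⟩
        have := hmono 0 i his (by omega); omega
      refine Finset.prod_eq_zero hriIoo ?_
      rcases Nat.lt_or_ge (k i) (k j) with hlt | hge
      · apply mul_eq_zero_of_right
        refine Finset.prod_eq_zero (show k j - k i - 1 ∈ range (a (r j)) from by
          rw [mem_range]; omega) ?_
        have hm : (k j - k i - 1) + 1 = k j - k i := by omega
        rw [hm, hE i his, hE j hjs,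
          qpow_cancel (XX (r s)) qq (XX_ne_zero _) qq_ne_zero _ _ _ (by omega)]
        exact sub_self 1
      · apply mul_eq_zero_of_left
        refine Finset.prod_eq_zero (show k i - k j ∈ range (a (r i)) from by
          rw [mem_range]; omega) ?_
        rw [hE i his, hE j hjs,
          qpow_cancel (XX (r s)) qq (XX_ne_zero _) qq_ne_zero _ _ _ (by omega)]
        exact sub_self 1
  · push_neg at h1
    obtain ⟨i, hi, hik⟩ := h1
    obtain ⟨hi1, his⟩ := mem_Icc.mp hi
    have hki1 : 1 ≤ k i := (hk i hi).1
    apply mul_eq_zero_of_left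
    refine Finset.prod_eq_zero (hrIcc i hi1 his) ?_
    have hN : ∏ c ∈ range (a (r i)),
        (1 - qq ^ (c+1) * Esub s r k (r i) / Esub s r k 0) = 0 := by
      refine Finset.prod_eq_zero (show k i - 1 ∈ range (a (r i)) from by
        rw [mem_range]; omega) ?_
      have hm : (k i - 1) + 1 = k i := by omega
      rw [hm, hE i his, hE0,
        qpow_cancel (XX (r s)) qq (XX_ne_zero _) qq_ne_zero _ _ _ (by omega)]
      exact sub_self 1
    rw [hN, zero_div]

end
end
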